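/- Let t, r, φ, z : ℝ → ℝ be a geodesic of Gödel's universe, fix u₀ ∈ ℝ, and set c₁ = C₁(u₀), c₂ = C₂(u₀), A = P_{2,0}(u₀), B = P_{0,1}(u₀). Then at every u ∈ ℝ where r'(u) ≠ 0, the radial coordinate as a function of the angle satisfies dr/dφ = r'(u)/φ'(u) = (c₁·sin(φ(u)) + c₂·cos(φ(u))) / ((√2/sinh(r(u))²)·(B − A/cosh(r(u))²)), provided φ'(u) ≠ 0. -/

import Mathlib

open Real

/-- A function is twice differentiable (everywhere on ℝ). -/
def TwiceDiff (f : ℝ → ℝ) : Prop :=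
  Differentiable ℝ f ∧ Differentiable ℝ (deriv f)

/-- The four geodesic differential equations of Gödel's universe in
cylindrical coordinates. -/
def GodelGeodesicEqns (t r φ z : ℝ → ℝ) : Prop :=
  ∀ u : ℝ,
    (deriv (deriv t) u + 4 * Real.tanh (r u) * deriv t u * deriv r u
      + 2 * Real.sqrt 2 * (Real.sinh (r u) ^ 3 / Real.cosh (r u)) * deriv φ u * deriv r u = 0)
    ∧ (deriv (deriv r) u
      + 2 * Real.sqrt 2 * Real.sinh (r u) * Real.cosh (r u) * deriv t u * deriv φ u
      + Real.sinh (r u) * Real.cosh (r u) * (2 * Real.cosh (r u) ^ 2 - 3) * (deriv φ u) ^ 2 = 0)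
    ∧ (deriv (deriv φ) u * Real.sinh (r u) * Real.cosh (r u)
      - 2 * Real.sqrt 2 * deriv t u * deriv r u + 2 * deriv φ u * deriv r u = 0)
    ∧ (deriv (deriv z) u = 0)

/-- The conserved momentum quantity `P_{ρ₁,ρ₂}` along a curve. -/
noncomputable def godelP (t r φ : ℝ → ℝ) (ρ₁ ρ₂ : ℝ) (u : ℝ) : ℝ :=
  (ρ₂ + ρ₁ * Real.cosh (r u) ^ 2 / 2) * deriv t u
    + ((ρ₁ * Real.cosh (r u) ^ 2 + 4 * ρ₂) * Real.sinh (r u) ^ 2 / (2 * Real.sqrt 2)) * deriv φ u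

/-- The conserved quantity `C₁` along a curve. -/
noncomputable def godelC1 (t r φ : ℝ → ℝ) (u : ℝ) : ℝ :=
  -(Real.sqrt 2) * Real.cos (φ u) * Real.sinh (2 * r u) * deriv t u
    + Real.sin (φ u) * deriv r u
    - Real.cos (φ u) * (Real.cosh (2 * r u) - 2) * Real.sinh (2 * r u) / 2 * deriv φ u

/-- The conserved quantity `C₂` along a curve. -/
noncomputable def godelC2 (t r φ : ℝ → ℝ) (u : ℝ) : ℝ :=
  Real.sqrt 2 * Real.sin (φ u) * Real.sinh (2 * r u) * deriv t u
    + Real.cos (φ u) * deriv r u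
    + Real.sin (φ u) * (Real.cosh (2 * r u) - 2) * Real.sinh (2 * r u) / 2 * deriv φ u

/-- Along a geodesic, wherever `r' ≠ 0` and `φ' ≠ 0`, the ratio
`dr/dφ = r'/φ'` equals the quotient of the conserved-quantity expressions. -/
theorem godel_dr_dphi (t r φ z : ℝ → ℝ)
    (ht : TwiceDiff t) (hr : TwiceDiff r) (hφ : TwiceDiff φ) (hz : TwiceDiff z)
    (hrpos : ∀ u, 0 < r u)
    (hgeo : GodelGeodesicEqns t r φ z)
    (u₀ : ℝ) (c₁ c₂ A B : ℝ)
    (hc₁ : c₁ = godelC1 t r φ u₀) (hc₂ : c₂ = godelC2 t r φ u₀)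
    (hA : A = godelP t r φ 2 0 u₀) (hB : B = godelP t r φ 0 1 u₀) :
    ∀ u : ℝ, deriv r u ≠ 0 → deriv φ u ≠ 0 →
      deriv r u / deriv φ u
        = (c₁ * Real.sin (φ u) + c₂ * Real.cos (φ u))
            / (Real.sqrt 2 / Real.sinh (r u) ^ 2 * (B - A / Real.cosh (r u) ^ 2)) := by
  classical
  obtain ⟨ht1, ht2⟩ := ht
  obtain ⟨hr1, hr2⟩ := hr
  obtain ⟨hφ1, hφ2⟩ := hφ
  have h2 : Real.sqrt 2 * Real.sqrt 2 = 2 := Real.mul_self_sqrt (by norm_num)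
  have hsqne : Real.sqrt 2 ≠ 0 := by positivity
  -- division-free first geodesic equation
  have e1 : ∀ u : ℝ, Real.cosh (r u) * deriv (deriv t) u
      + 4 * Real.sinh (r u) * deriv t u * deriv r u
      + 2 * Real.sqrt 2 * Real.sinh (r u) ^ 3 * deriv φ u * deriv r u = 0 := by
    intro u
    have eq1 := (hgeo u).1
    rw [Real.tanh_eq_sinh_div_cosh] at eq1
    have hc : Real.cosh (r u) ≠ 0 := (Real.cosh_pos (r u)).ne'
    field_simp at eq1
    linear_combination eq1
  -- basic HasDerivAt facts
  have hT' : ∀ u : ℝ, HasDerivAt (deriv t) (deriv (deriv t) u) u :=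
    fun u => (ht2 u).hasDerivAt
  have hR : ∀ u : ℝ, HasDerivAt r (deriv r u) u := fun u => (hr1 u).hasDerivAt
  have hR' : ∀ u : ℝ, HasDerivAt (deriv r) (deriv (deriv r) u) u :=
    fun u => (hr2 u).hasDerivAt
  have hP : ∀ u : ℝ, HasDerivAt φ (deriv φ u) u := fun u => (hφ1 u).hasDerivAt
  have hP' : ∀ u : ℝ, HasDerivAt (deriv φ) (deriv (deriv φ) u) u :=
    fun u => (hφ2 u).hasDerivAt
  have hsin : ∀ u : ℝ, HasDerivAt (fun x => Real.sin (φ x)) (Real.cos (φ u) * deriv φ u) u :=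
    fun u => (Real.hasDerivAt_sin (φ u)).comp u (hP u)
  have hcos : ∀ u : ℝ, HasDerivAt (fun x => Real.cos (φ x)) (-Real.sin (φ u) * deriv φ u) u :=
    fun u => (Real.hasDerivAt_cos (φ u)).comp u (hP u)
  have h2r : ∀ u : ℝ, HasDerivAt (fun x => 2 * r x) (2 * deriv r u) u :=
    fun u => (hR u).const_mul 2
  have hsh2 : ∀ u : ℝ, HasDerivAt (fun x => Real.sinh (2 * r x))
      (Real.cosh (2 * r u) * (2 * deriv r u)) u :=
    fun u => (Real.hasDerivAt_sinh (2 * r u)).comp (h := fun x => 2 * r x) u (h2r u)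
  have hch2 : ∀ u : ℝ, HasDerivAt (fun x => Real.cosh (2 * r x))
      (Real.sinh (2 * r u) * (2 * deriv r u)) u :=
    fun u => (Real.hasDerivAt_cosh (2 * r u)).comp (h := fun x => 2 * r x) u (h2r u)
  have hshr : ∀ u : ℝ, HasDerivAt (fun x => Real.sinh (r x))
      (Real.cosh (r u) * deriv r u) u :=
    fun u => (Real.hasDerivAt_sinh (r u)).comp u (hR u)
  have hchr : ∀ u : ℝ, HasDerivAt (fun x => Real.cosh (r x))
      (Real.sinh (r u) * deriv r u) u :=
    fun u => (Real.hasDerivAt_cosh (r u)).comp u (hR u)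
  -- conservation of C1
  have keyC1 : ∀ u : ℝ, HasDerivAt (godelC1 t r φ) 0 u := by
    intro u
    have H := (((((hcos u).const_mul (-(Real.sqrt 2))).mul (hsh2 u)).mul (hT' u)).add
        ((hsin u).mul (hR' u))).sub
      (((((hcos u).mul ((hch2 u).sub_const 2)).mul (hsh2 u)).div_const 2).mul (hP' u))
    convert H using 1
    · rfl
    · rfl
    · rfl
    simp only [Pi.mul_apply, Pi.pow_apply]
    rw [Real.sinh_two_mul, Real.cosh_two_mul]
    have he1 := e1 u
    have eq2 := (hgeo u).2.1
    have eq3 := (hgeo u).2.2.1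
    have hcsq : Real.cosh (r u) ^ 2 = Real.sinh (r u) ^ 2 + 1 := Real.cosh_sq (r u)
    linear_combination
      (2 * Real.sqrt 2 * Real.cos (φ u) * Real.sinh (r u)) * he1
      + (-Real.sin (φ u)) * eq2
      + (Real.cos (φ u) * (2 * Real.cosh (r u) ^ 2 - 3)) * eq3
      + (-(4 * Real.sinh (r u) ^ 4 * Real.cos (φ u) * deriv r u * deriv φ u)) * h2
      + (-(8 * Real.cos (φ u) * deriv r u * deriv φ u
          - 8 * Real.cos (φ u) * deriv t u * deriv r u * Real.sqrt 2
          - 4 * Real.cosh (r u) ^ 2 * Real.cos (φ u) * deriv r u * deriv φ u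
          - 8 * Real.sinh (r u) ^ 2 * Real.cos (φ u) * deriv r u * deriv φ u)) * hcsq
      + (3 * Real.cos (φ u) * deriv r u * deriv φ u
          - 2 * Real.sqrt 2 * Real.cos (φ u) * deriv t u * deriv r u
          - 3 * Real.cosh (r u) ^ 2 * Real.cos (φ u) * deriv r u * deriv φ u
          - Real.sinh (r u) * Real.cosh (r u) * Real.cos (φ u) * deriv (deriv φ) u
          + Real.sinh (r u) * Real.cosh (r u) * Real.sin (φ u) * deriv φ u ^ 2
          - Real.sinh (r u) ^ 2 * Real.cos (φ u) * deriv r u * deriv φ u) * hcsq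
  -- conservation of C2
  have keyC2 : ∀ u : ℝ, HasDerivAt (godelC2 t r φ) 0 u := by
    intro u
    have H := (((((hsin u).const_mul (Real.sqrt 2)).mul (hsh2 u)).mul (hT' u)).add
        ((hcos u).mul (hR' u))).add
      (((((hsin u).mul ((hch2 u).sub_const 2)).mul (hsh2 u)).div_const 2).mul (hP' u))
    convert H using 1
    · rfl
    · rfl
    · rfl
    simp only [Pi.mul_apply, Pi.pow_apply]
    rw [Real.sinh_two_mul, Real.cosh_two_mul]
    have he1 := e1 u
    have eq2 := (hgeo u).2.1
    have eq3 := (hgeo u).2.2.1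
    have hcsq : Real.cosh (r u) ^ 2 = Real.sinh (r u) ^ 2 + 1 := Real.cosh_sq (r u)
    linear_combination
      (-(2 * Real.sqrt 2 * Real.sin (φ u) * Real.sinh (r u))) * he1
      + (-Real.cos (φ u)) * eq2
      + (-(Real.sin (φ u) * (2 * Real.cosh (r u) ^ 2 - 3))) * eq3
      + (4 * Real.sinh (r u) ^ 4 * Real.sin (φ u) * deriv r u * deriv φ u) * h2
      + (-(-8 * Real.sin (φ u) * deriv r u * deriv φ u
          + 8 * Real.sin (φ u) * deriv t u * deriv r u * Real.sqrt 2
          + 4 * Real.cosh (r u) ^ 2 * Real.sin (φ u) * deriv r u * deriv φ u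
          + 8 * Real.sinh (r u) ^ 2 * Real.sin (φ u) * deriv r u * deriv φ u)) * hcsq
      + (-3 * Real.sin (φ u) * deriv r u * deriv φ u
          + 2 * Real.sqrt 2 * Real.sin (φ u) * deriv t u * deriv r u
          + 3 * Real.cosh (r u) ^ 2 * Real.sin (φ u) * deriv r u * deriv φ u
          + Real.sinh (r u) * Real.cosh (r u) * Real.cos (φ u) * deriv φ u ^ 2
          + Real.sinh (r u) * Real.cosh (r u) * Real.sin (φ u) * deriv (deriv φ) u
          + Real.sinh (r u) ^ 2 * Real.sin (φ u) * deriv r u * deriv φ u) * hcsq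
  -- conservation of P
  have keyP : ∀ (ρ₁ ρ₂ : ℝ) (u : ℝ), HasDerivAt (godelP t r φ ρ₁ ρ₂) 0 u := by
    intro ρ₁ ρ₂ u
    have H := (((((hchr u).pow 2).const_mul ρ₁).div_const 2).const_add ρ₂ |>.mul (hT' u)).add
      ((((((hchr u).pow 2).const_mul ρ₁).add_const (4 * ρ₂)).mul ((hshr u).pow 2)
          |>.div_const (2 * Real.sqrt 2)).mul (hP' u))
    convert H using 1
    · rfl
    · rfl
    · rfl
    simp only [Pi.mul_apply, Pi.pow_apply]
    have hdiv : ∀ x : ℝ, x / (2 * Real.sqrt 2) = x * Real.sqrt 2 / 4 := by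
      intro x
      rw [div_eq_div_iff (by positivity) (by norm_num)]
      linear_combination (-2 * x) * h2
    simp only [hdiv]
    have hc : Real.cosh (r u) ≠ 0 := (Real.cosh_pos (r u)).ne'
    apply mul_left_cancel₀ hc
    have he1 := e1 u
    have eq3 := (hgeo u).2.2.1
    have hcsq : Real.cosh (r u) ^ 2 = Real.sinh (r u) ^ 2 + 1 := Real.cosh_sq (r u)
    linear_combination
      (-(ρ₂ + ρ₁ * Real.cosh (r u) ^ 2 / 2)) * he1
      + (-((ρ₁ * Real.cosh (r u) ^ 2 + 4 * ρ₂) * Real.sinh (r u) * Real.sqrt 2 / 4)) * eq3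
      + (-((2 * ρ₂ + ρ₁ * Real.cosh (r u) ^ 2 / 2) * Real.sinh (r u)
          * deriv t u * deriv r u)) * h2
      + (-((2 * ρ₂ + ρ₁ * Real.cosh (r u) ^ 2 / 2) * Real.sinh (r u)
          * deriv r u * deriv φ u * Real.sqrt 2)) * hcsq
  -- constancy
  have constC1 : ∀ u : ℝ, godelC1 t r φ u = godelC1 t r φ u₀ := fun u =>
    is_const_of_deriv_eq_zero (fun x => (keyC1 x).differentiableAt)
      (fun x => (keyC1 x).deriv) u u₀
  have constC2 : ∀ u : ℝ, godelC2 t r φ u = godelC2 t r φ u₀ := fun u =>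
    is_const_of_deriv_eq_zero (fun x => (keyC2 x).differentiableAt)
      (fun x => (keyC2 x).deriv) u u₀
  have constP : ∀ (ρ₁ ρ₂ : ℝ) (u : ℝ), godelP t r φ ρ₁ ρ₂ u = godelP t r φ ρ₁ ρ₂ u₀ :=
    fun ρ₁ ρ₂ u => is_const_of_deriv_eq_zero (fun x => (keyP ρ₁ ρ₂ x).differentiableAt)
      (fun x => (keyP ρ₁ ρ₂ x).deriv) u u₀
  intro u hrp hpp
  have hc1u : c₁ = godelC1 t r φ u := by rw [hc₁, constC1 u]
  have hc2u : c₂ = godelC2 t r φ u := by rw [hc₂, constC2 u]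
  have hAu : A = godelP t r φ 2 0 u := by rw [hA, constP 2 0 u]
  have hBu : B = godelP t r φ 0 1 u := by rw [hB, constP 0 1 u]
  have hnum : c₁ * Real.sin (φ u) + c₂ * Real.cos (φ u) = deriv r u := by
    rw [hc1u, hc2u]
    unfold godelC1 godelC2
    linear_combination (deriv r u) * Real.sin_sq_add_cos_sq (φ u)
  have hs : Real.sinh (r u) ≠ 0 := (Real.sinh_pos_iff.mpr (hrpos u)).ne'
  have hc : Real.cosh (r u) ≠ 0 := (Real.cosh_pos (r u)).ne'
  have hden : Real.sqrt 2 / Real.sinh (r u) ^ 2 * (B - A / Real.cosh (r u) ^ 2)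
      = deriv φ u := by
    rw [hAu, hBu]
    unfold godelP
    field_simp
    ring_nf
  rw [hnum, hden]
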